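/- Let A_q(ℓ+m, ℓ, k) denote the maximum number of ℓ-dimensional subspaces of an (ℓ+m)-dimensional F_q-space such that any two distinct subspaces intersect in dimension at most k-1. Then A_q(ℓ+m, ℓ, k) ≤ Gaussian binomial [m+k choose k]_q = Π_{i=0}^{k-1} (q^{m+k-i} - 1)/(q^{k-i} - 1). -/

import Mathlib

private lemma core7 (Q : ℚ) (hQ : 2 ≤ Q) (m b d : ℕ) (hb : 1 ≤ b) :
    (Q ^ (b + d + m) - 1) / (Q ^ (b + d) - 1) ≤ (Q ^ (m + b) - 1) / (Q ^ b - 1) := by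
  have hX : (2:ℚ) ≤ Q ^ b := by
    calc (2:ℚ) ≤ Q ^ 1 := by simpa
    _ ≤ Q ^ b := pow_le_pow_right₀ (by linarith) hb
  have hD : (1:ℚ) ≤ Q ^ d := one_le_pow₀ (by linarith)
  have hM : (1:ℚ) ≤ Q ^ m := one_le_pow₀ (by linarith)
  have h1 : (0:ℚ) < Q ^ (b + d) - 1 := by rw [pow_add]; nlinarith
  have h2 : (0:ℚ) < Q ^ b - 1 := by linarith
  rw [div_le_div_iff₀ h1 h2, pow_add, pow_add, pow_add]
  nlinarith [mul_nonneg (mul_nonneg (by linarith : (0:ℚ) ≤ Q ^ b)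
    (by linarith : (0:ℚ) ≤ Q ^ m - 1)) (by linarith : (0:ℚ) ≤ Q ^ d - 1)]

private lemma factor7 (Q : ℚ) (hQ : 2 ≤ Q) (k ℓ m i : ℕ) (hik : i < k) (hkl : k ≤ ℓ) :
    (Q ^ (ℓ + m) - Q ^ i) / (Q ^ ℓ - Q ^ i) ≤ (Q ^ (m + k - i) - 1) / (Q ^ (k - i) - 1) := by
  have hQi : (0:ℚ) < Q ^ i := pow_pos (by linarith) i
  obtain ⟨b, d, hb, h5, h3, h4, h6⟩ :
      ∃ b d, 1 ≤ b ∧ k - i = b ∧ ℓ = i + (b + d) ∧ ℓ + m = i + (b + d + m) ∧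
        m + k - i = m + b :=
    ⟨k - i, ℓ - k, by omega, rfl, by omega, by omega, by omega⟩
  rw [h4, h3, h5, h6,
      show Q^(i+(b+d+m)) - Q^i = Q^i * (Q^(b+d+m) - 1) from by rw [pow_add]; ring,
      show Q^(i+(b+d)) - Q^i = Q^i * (Q^(b+d) - 1) from by rw [pow_add]; ring,
      mul_div_mul_left _ _ (ne_of_gt hQi)]
  exact core7 Q hQ m b d hb

/-- Singleton-type bound: any family of `ℓ`-dimensional subspaces of an
`(ℓ+m)`-dimensional space over `F_q`, pairwise intersecting in dimension at most `k-1`,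
has size at most the Gaussian binomial `[m+k choose k]_q`. -/
theorem stmt7 (q k ℓ m : ℕ) (K V : Type*) [Field K] [Fintype K]
    (hq : Fintype.card K = q)
    [AddCommGroup V] [Module K V] [FiniteDimensional K V]
    (hdim : Module.finrank K V = ℓ + m) (hk : 1 ≤ k) (hkl : k ≤ ℓ) (hlm : ℓ ≤ m)
    (C : Set (Submodule K V)) (hC : ∀ U ∈ C, Module.finrank K ↥U = ℓ)
    (hint : ∀ U ∈ C, ∀ W ∈ C, U ≠ W → Module.finrank K ↥(U ⊓ W) ≤ k - 1) :
    (Nat.card C : ℚ) ≤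
      ∏ i ∈ Finset.range k, (((q : ℚ) ^ (m + k - i) - 1) / ((q : ℚ) ^ (k - i) - 1)) := by
  classical
  have hV : Finite V := Module.finite_of_finite K
  have h1q : 1 < q := hq ▸ Fintype.one_lt_card
  set S : Submodule K V → Set (Fin k → V) :=
    fun U => {f | LinearIndependent K f ∧ ∀ i, f i ∈ U} with hS_def
  set A : ℕ := ∏ i : Fin k, (q ^ ℓ - q ^ i.val) with hA_def
  set B : ℕ := ∏ i : Fin k, (q ^ (ℓ + m) - q ^ i.val) with hB_def
  -- cardinality of S U
  have hSU : ∀ U ∈ C, Nat.card (S U) = A := by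
    intro U hU
    have hUfin : Module.finrank K ↥U = ℓ := hC U hU
    have e : {s : Fin k → ↥U // LinearIndependent K s} ≃ S U :=
      { toFun := fun s => ⟨fun i => (s.1 i : V), by
          constructor
          · exact s.2.map' U.subtype U.ker_subtype
          · intro i; exact (s.1 i).2⟩
        invFun := fun f => ⟨fun i => ⟨f.1 i, f.2.2 i⟩, by
          apply (U.subtype.linearIndependent_iff U.ker_subtype).mp
          exact f.2.1⟩
        left_inv := fun s => by ext i; rfl
        right_inv := fun f => by ext i; rfl }
    rw [← Nat.card_congr e, card_linearIndependent (by rw [hUfin]; exact hkl), hUfin, hq, hA_def]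
  -- disjointness
  have hdisj : ∀ U ∈ C, ∀ W ∈ C, U ≠ W → Disjoint (S U) (S W) := by
    intro U hU W hW hUW
    rw [Set.disjoint_left]
    rintro f ⟨hf, hfU⟩ ⟨-, hfW⟩
    have hspan : Submodule.span K (Set.range f) ≤ U ⊓ W := by
      rw [Submodule.span_le]
      rintro x ⟨i, rfl⟩
      exact ⟨hfU i, hfW i⟩
    have h1 : Module.finrank K ↥(Submodule.span K (Set.range f)) = k := by
      rw [finrank_span_eq_card hf, Fintype.card_fin]
    have h2 := Submodule.finrank_mono hspan
    have h3 := hint U hU W hW hUW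
    omega
  -- the counting inequality
  have key : Nat.card C * A ≤ B := by
    have hCfin : C.Finite := Set.toFinite C
    set Cf : Finset (Submodule K V) := hCfin.toFinset with hCf
    set Sf : Submodule K V → Finset (Fin k → V) := fun U => (Set.toFinite (S U)).toFinset
      with hSf
    have hcard : Nat.card C = Cf.card := by
      rw [Nat.card_coe_set_eq, Set.ncard_eq_toFinset_card C hCfin]
    have hbu : (Cf.biUnion Sf).card = Cf.card * A := by
      rw [Finset.card_biUnion]
      · rw [Finset.sum_congr rfl (fun U hU => ?_), Finset.sum_const, smul_eq_mul]
        have hU : U ∈ C := hCfin.mem_toFinset.mp hU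
        rw [hSf]
        simp only
        rw [← Set.ncard_eq_toFinset_card (S U), ← Nat.card_coe_set_eq]
        exact hSU U hU
      · intro U hU W hW hUW
        rw [hSf]
        simp only [Set.Finite.disjoint_toFinset]
        exact hdisj U (hCfin.mem_toFinset.mp hU) W (hCfin.mem_toFinset.mp hW) hUW
    have hsub : Cf.biUnion Sf ⊆ (Set.toFinite {f : Fin k → V | LinearIndependent K f}).toFinset := by
      intro f hf
      rw [Finset.mem_biUnion] at hf
      obtain ⟨U, -, hfU⟩ := hf
      rw [hSf] at hfU
      rw [Set.Finite.mem_toFinset] at hfU ⊢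
      exact hfU.1
    have hT : (Set.toFinite {f : Fin k → V | LinearIndependent K f}).toFinset.card = B := by
      rw [← Set.ncard_eq_toFinset_card, ← Nat.card_coe_set_eq]
      have : Nat.card {f : Fin k → V // LinearIndependent K f} = B := by
        rw [card_linearIndependent (by rw [hdim]; omega), hdim, hq, hB_def]
      exact this
    calc Nat.card C * A = (Cf.biUnion Sf).card := by rw [hcard, hbu]
      _ ≤ _ := Finset.card_le_card hsub
      _ = B := hT
  -- pass to rationals
  set Q : ℚ := (q : ℚ) with hQ_def
  have hQ2 : (2:ℚ) ≤ Q := by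
    have h2q : 2 ≤ q := h1q
    rw [hQ_def]
    exact_mod_cast h2q
  have hAposN : 0 < A := by
    rw [hA_def]
    apply Finset.prod_pos
    intro i _
    have : q ^ i.val < q ^ ℓ := Nat.pow_lt_pow_right h1q (lt_of_lt_of_le i.2 hkl)
    omega
  have hApos : 0 < (A:ℚ) := by exact_mod_cast hAposN
  have hcastA : (A:ℚ) = ∏ i ∈ Finset.range k, (Q ^ ℓ - Q ^ i) := by
    rw [hA_def, Nat.cast_prod,
      Fin.prod_univ_eq_prod_range (fun i => ((q ^ ℓ - q ^ i : ℕ) : ℚ)) k]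
    refine Finset.prod_congr rfl fun i hi => ?_
    rw [Finset.mem_range] at hi
    rw [Nat.cast_sub (Nat.pow_le_pow_right (by omega) (by omega))]
    push_cast
    rfl
  have hcastB : (B:ℚ) = ∏ i ∈ Finset.range k, (Q ^ (ℓ + m) - Q ^ i) := by
    rw [hB_def, Nat.cast_prod,
      Fin.prod_univ_eq_prod_range (fun i => ((q ^ (ℓ + m) - q ^ i : ℕ) : ℚ)) k]
    refine Finset.prod_congr rfl fun i hi => ?_
    rw [Finset.mem_range] at hi
    rw [Nat.cast_sub (Nat.pow_le_pow_right (by omega) (by omega))]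
    push_cast
    rfl
  have step1 : (Nat.card C : ℚ) ≤ (B:ℚ) / (A:ℚ) := by
    rw [le_div_iff₀ hApos]
    exact_mod_cast key
  refine step1.trans ?_
  have hBA : (B:ℚ) / (A:ℚ) = ∏ i ∈ Finset.range k, ((Q ^ (ℓ + m) - Q ^ i) / (Q ^ ℓ - Q ^ i)) := by
    rw [hcastA, hcastB, Finset.prod_div_distrib]
  rw [hBA]
  apply Finset.prod_le_prod
  · intro i hi
    rw [Finset.mem_range] at hi
    have hnum : (0:ℚ) ≤ Q ^ (ℓ + m) - Q ^ i := by
      have h := pow_le_pow_right₀ (by linarith : (1:ℚ) ≤ Q) (by omega : i ≤ ℓ + m)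
      linarith
    have hden : (0:ℚ) < Q ^ ℓ - Q ^ i := by
      have : Q ^ i < Q ^ ℓ := pow_lt_pow_right₀ (by linarith) (by omega)
      linarith
    positivity
  · intro i hi
    rw [Finset.mem_range] at hi
    exact factor7 Q hQ2 k ℓ m i hi hkl
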